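/- Let k ∈ {17, 19, 23} be prime and n ≥ 2 an integer. There is no integer m and no 0 ≤ j ≤ k-1 such that ζ^j·(-m + ζ) = (-n + ζ)^k, where ζ is a primitive k-th root of unity. -/

import Mathlib

open Polynomial Real Complex

-- |−n + exp(θ I)|² = n² − 2n cos θ + 1
lemma absSq_aux (n : ℤ) (θ : ℝ) :
    (‖-(n:ℂ) + Complex.exp ((θ:ℂ) * Complex.I)‖)^2
      = (n:ℝ)^2 - 2*(n:ℝ)*Real.cos θ + 1 := by
  rw [Complex.sq_norm, Complex.normSq_apply]
  simp [Complex.exp_ofReal_mul_I_re, Complex.exp_ofReal_mul_I_im]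
  nlinarith [Real.sin_sq_add_cos_sq θ]

set_option maxHeartbeats 1000000 in
/-- For `k ∈ {17, 19, 23}` and an integer `n ≥ 2`, there is no integer `m` and no
`0 ≤ j ≤ k - 1` with `ζ^j (-m + ζ) = (-n + ζ)^k`, `ζ` a primitive `k`-th root of unity. -/
theorem no_unit_twisted_linear_eq_kth_power (k : ℕ) (hk : k = 17 ∨ k = 19 ∨ k = 23)
    (ζ : ℂ) (hζ : IsPrimitiveRoot ζ k) (n : ℤ) (hn : 2 ≤ n) :
    ¬ ∃ (m : ℤ) (j : ℕ), j ≤ k - 1 ∧ ζ ^ j * (-(m : ℂ) + ζ) = (-(n : ℂ) + ζ) ^ k := by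
  rintro ⟨m, j, hj, heq⟩
  have hk17 : 17 ≤ k := by rcases hk with h | h | h <;> omega
  have hkpos : 0 < k := by omega
  have hk0 : (k:ℝ) ≠ 0 := by positivity
  have hcop : Nat.Coprime ((k-1)/2) k := by rcases hk with h | h | h <;> subst h <;> decide
  have h2h : ((((k-1)/2 : ℕ)):ℝ) * 2 = (k:ℝ) - 1 := by
    rcases hk with h | h | h <;> subst h <;> norm_num
  -- the polynomial
  set P : ℚ[X] := X^j * (C (-(m:ℚ)) + X) - (C (-(n:ℚ)) + X)^k with hP
  have hroot : (aeval ζ) P = 0 := by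
    simp only [hP, map_sub, map_mul, map_pow, map_add, aeval_X, aeval_C,
      eq_ratCast, Rat.cast_neg, Rat.cast_intCast]
    rw [heq, sub_self]
  have hmin : minpoly ℚ ζ = cyclotomic k ℚ := (cyclotomic_eq_minpoly_rat hζ hkpos).symm
  have hdvd : cyclotomic k ℚ ∣ P := hmin ▸ minpoly.dvd ℚ ζ hroot
  have key : ∀ ζ' : ℂ, IsPrimitiveRoot ζ' k →
      ζ'^j * (-(m:ℂ) + ζ') = (-(n:ℂ) + ζ')^k := by
    intro ζ' hζ'
    obtain ⟨Q, hQ⟩ := hdvd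
    have h0 : (aeval ζ') (cyclotomic k ℚ) = 0 := by
      have := hζ'.isRoot_cyclotomic hkpos
      rwa [aeval_def, ← eval_map, map_cyclotomic]
    have hPz : (aeval ζ') P = 0 := by rw [hQ, map_mul, h0, zero_mul]
    have : ζ'^j * (-(m:ℂ) + ζ') - (-(n:ℂ) + ζ')^k = 0 := by
      simpa only [hP, map_sub, map_mul, map_pow, map_add, aeval_X, aeval_C,
        eq_ratCast, Rat.cast_neg, Rat.cast_intCast] using hPz
    exact sub_eq_zero.mp this
  -- two specific primitive roots
  set θ₁ : ℝ := 2 * π / k with hθ₁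
  set θ₂ : ℝ := 2 * π * ((k-1)/2 : ℕ) / k with hθ₂
  have hζ₁ : IsPrimitiveRoot (Complex.exp ((θ₁:ℂ) * Complex.I)) k := by
    have := Complex.isPrimitiveRoot_exp k (by omega)
    convert this using 2
    push_cast [hθ₁]
    ring
  have hζ₂ : IsPrimitiveRoot (Complex.exp ((θ₂:ℂ) * Complex.I)) k := by
    have := hζ₁.pow_of_coprime ((k-1)/2) hcop
    rwa [← Complex.exp_nat_mul, show ((((k-1)/2:ℕ)):ℂ) * ((θ₁:ℂ) * Complex.I)
      = (θ₂:ℂ) * Complex.I by push_cast [hθ₁, hθ₂]; ring] at this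
  -- cos values
  have hcosθ₂ : Real.cos θ₂ = - Real.cos (π / k) := by
    have : θ₂ = π - π / k := by
      rw [hθ₂]
      field_simp
      linear_combination h2h
    rw [this, Real.cos_pi_sub]
  have hπk : 0 < π / k := by positivity
  have hc2 : (1:ℝ)/2 ≤ Real.cos (π / k) := by
    have h1 : π / k ≤ π / 3 := by
      apply div_le_div_of_nonneg_left Real.pi_pos.le (by norm_num)
      exact_mod_cast by omega
    calc (1:ℝ)/2 = Real.cos (π/3) := by rw [Real.cos_pi_div_three]
    _ ≤ Real.cos (π/k) := Real.cos_le_cos_of_nonneg_of_le_pi hπk.le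
        (by linarith [Real.pi_pos]) h1
  have hc1 : 0 < Real.cos θ₁ := by
    apply Real.cos_pos_of_mem_Ioo
    constructor
    · have : 0 < θ₁ := by rw [hθ₁]; positivity
      linarith [Real.pi_pos]
    · rw [hθ₁]
      rw [div_lt_div_iff₀ (by exact_mod_cast hkpos) (by norm_num)]
      have h4 : (4:ℝ) < k := by exact_mod_cast (by omega : 4 < k)
      nlinarith [mul_lt_mul_of_pos_left h4 Real.pi_pos]
  -- abs values
  set A := ‖-(n:ℂ) + Complex.exp ((θ₁:ℂ) * Complex.I)‖ with hA
  set B := ‖-(n:ℂ) + Complex.exp ((θ₂:ℂ) * Complex.I)‖ with hB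
  have hA2 : A^2 = (n:ℝ)^2 - 2*(n:ℝ)*Real.cos θ₁ + 1 := absSq_aux n θ₁
  have hB2 : B^2 = (n:ℝ)^2 - 2*(n:ℝ)*Real.cos θ₂ + 1 := absSq_aux n θ₂
  have hn' : (2:ℝ) ≤ (n:ℝ) := by exact_mod_cast hn
  have hcosθ₁le : Real.cos θ₁ ≤ 1 := Real.cos_le_one θ₁
  have hA1 : 1 ≤ A := by
    nlinarith [norm_nonneg (-(n:ℂ) + Complex.exp ((θ₁:ℂ) * Complex.I))]
  have hBA : 2 < B^2 - A^2 := by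
    rw [hA2, hB2, hcosθ₂]
    nlinarith
  have hAB : A ≤ B := by
    nlinarith [norm_nonneg (-(n:ℂ) + Complex.exp ((θ₂:ℂ) * Complex.I))]
  -- the two equations
  have e₁ := key _ hζ₁
  have e₂ := key _ hζ₂
  have habs1 : ‖-(m:ℂ) + Complex.exp ((θ₁:ℂ) * Complex.I)‖ = A ^ k := by
    have := congrArg norm e₁
    rwa [norm_mul, norm_pow, norm_pow, Complex.norm_exp_ofReal_mul_I, one_pow, one_mul] at this
  have habs2 : ‖-(m:ℂ) + Complex.exp ((θ₂:ℂ) * Complex.I)‖ = B ^ k := by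
    have := congrArg norm e₂
    rwa [norm_mul, norm_pow, norm_pow, Complex.norm_exp_ofReal_mul_I, one_pow, one_mul] at this
  -- triangle inequality
  have htri : B ^ k ≤ A ^ k + 2 := by
    have h1 : ‖-(m:ℂ) + Complex.exp ((θ₂:ℂ) * Complex.I)‖
        ≤ ‖-(m:ℂ) + Complex.exp ((θ₁:ℂ) * Complex.I)‖
          + ‖Complex.exp ((θ₂:ℂ) * Complex.I) - Complex.exp ((θ₁:ℂ) * Complex.I)‖ := by
      have := norm_add_le (-(m:ℂ) + Complex.exp ((θ₁:ℂ) * Complex.I))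
        (Complex.exp ((θ₂:ℂ) * Complex.I) - Complex.exp ((θ₁:ℂ) * Complex.I))
      refine (congrArg norm ?_).trans_le this
      ring
    have h2 : ‖Complex.exp ((θ₂:ℂ) * Complex.I) - Complex.exp ((θ₁:ℂ) * Complex.I)‖
        ≤ 2 := by
      calc ‖Complex.exp ((θ₂:ℂ) * Complex.I) - Complex.exp ((θ₁:ℂ) * Complex.I)‖
          ≤ ‖Complex.exp ((θ₂:ℂ) * Complex.I)‖
            + ‖Complex.exp ((θ₁:ℂ) * Complex.I)‖ := norm_sub_le _ _
        _ = 2 := by rw [Complex.norm_exp_ofReal_mul_I, Complex.norm_exp_ofReal_mul_I]; norm_num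
    rw [habs1, habs2] at h1
    linarith
  -- final contradiction : B^k - A^k ≥ (B²-A²)·A^(k-2) > 2
  have hgrow : B^2 * A^(k-2) ≤ B^k := by
    calc B^2 * A^(k-2) ≤ B^2 * B^(k-2) := by
          apply mul_le_mul_of_nonneg_left (pow_le_pow_left₀ (by linarith) hAB _) (by positivity)
      _ = B^k := by rw [← pow_add]; congr 1; omega
  have hAk : A^k = A^2 * A^(k-2) := by rw [← pow_add]; congr 1; omega
  have hA2k : (1:ℝ) ≤ A^(k-2) := one_le_pow₀ hA1
  nlinarith [hgrow, htri, hBA, hA2k, hAk]
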